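/- Let n ≥ 2, p ≥ 1, let φ₁, …, φₙ : ℝ^p → ℝ and r : ℝ^p → ℝ be convex and differentiable, let C ∈ ℝ^{n×n} be a gossip matrix with positive semidefinite square root √C (C = √C·√C), let C̄ = C ⊗ I_p and √C̄ = √C ⊗ I_p, and let ρ ≥ 0. Define H : ℝ^{np} → ℝ by H(λ₁, …, λₙ) = Σᵢ (φᵢ(λᵢ) + (1/n) r(λᵢ)) + (ρ/2) λᵀ C̄ λ, and F_ρ : ℝ^{np} → ℝ ∪ {+∞} by F_ρ(y) = sup_{λ∈ℝ^{np}} (−H(λ) − ⟨y, √C̄ λ⟩). If the function λ ↦ Σᵢ φᵢ(λ) + r(λ) on ℝ^p attains its minimum at some λ* ∈ ℝ^p, then F_ρ attains its minimum: there exists y* ∈ ℝ^{np} with F_ρ(y*) finite and F_ρ(y*) ≤ F_ρ(y) for all y ∈ ℝ^{np}. -/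

import Mathlib

open scoped RealInnerProductSpace Kronecker
open Matrix

/-- The `i`-th `ℝ^p`-block of a vector in `ℝ^{np}` (indexed by `Fin n × Fin p`). -/
noncomputable def blockComp {n p : ℕ} (lam : EuclideanSpace ℝ (Fin n × Fin p)) (i : Fin n) :
    EuclideanSpace ℝ (Fin p) :=
  WithLp.toLp 2 (fun j => lam (i, j))

/-- The linear map on `ℝ^{np}` induced by `M ⊗ I_p` for an `n × n` matrix `M`. -/
noncomputable def kronIdLin (p : ℕ) {n : ℕ} (M : Matrix (Fin n) (Fin n) ℝ) :
    EuclideanSpace ℝ (Fin n × Fin p) →ₗ[ℝ] EuclideanSpace ℝ (Fin n × Fin p) :=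
  Matrix.toEuclideanLin (M ⊗ₖ (1 : Matrix (Fin p) (Fin p) ℝ))

/-- Subgradient inequality for differentiable convex functions. -/
lemma convexOn_grad_ineq {E : Type*} [NormedAddCommGroup E] [NormedSpace ℝ E]
    {f : E → ℝ} (hc : ConvexOn ℝ Set.univ f) {f' : E →L[ℝ] ℝ} {a : E}
    (hd : HasFDerivAt f f' a) (x : E) : f a + f' (x - a) ≤ f x := by
  set γ : ℝ →ᵃ[ℝ] E := AffineMap.lineMap a x with hγ
  have hγ0 : γ 0 = a := by simp [hγ]
  have hγ1 : γ 1 = x := by simp [hγ]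
  have hline : HasDerivAt (fun t : ℝ => γ t) (x - a) 0 := by
    have h1 : HasDerivAt (fun t : ℝ => t • (x - a) + a) ((1 : ℝ) • (x - a)) 0 :=
      ((hasDerivAt_id (0:ℝ)).smul_const (x - a)).add_const a
    simpa [hγ, AffineMap.lineMap_apply_module'] using h1
  have hg : HasDerivAt (fun t : ℝ => f (γ t)) (f' (x - a)) 0 := by
    have hd' : HasFDerivAt f f' (γ 0) := hγ0 ▸ hd
    exact hd'.comp_hasDerivAt 0 hline
  have hconv : ConvexOn ℝ Set.univ (fun t : ℝ => f (γ t)) := by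
    exact hc.comp_affineMap γ
  have := hconv.le_slope_of_hasDerivAt (Set.mem_univ 0) (Set.mem_univ 1) one_pos hg
  rw [slope_def_field] at this
  simp [hγ0, hγ1] at this
  rw [map_sub]; linarith

/-- The range of a symmetric endomorphism is the orthogonal complement of its kernel. -/
lemma symm_range_eq {ι : Type*} [Fintype ι]
    (T : EuclideanSpace ℝ ι →ₗ[ℝ] EuclideanSpace ℝ ι) (hT : T.IsSymmetric) :
    LinearMap.range T = (LinearMap.ker T)ᗮ := by
  have hle : LinearMap.range T ≤ (LinearMap.ker T)ᗮ := by
    rintro x ⟨v, rfl⟩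
    intro k hk
    have hk' : T k = 0 := hk
    rw [← hT k v, hk', inner_zero_left]
  refine Submodule.eq_of_le_of_finrank_eq hle ?_
  have h1 := LinearMap.finrank_range_add_finrank_ker T
  have h2 := Submodule.finrank_add_finrank_orthogonal (K := LinearMap.ker T) (𝕜 := ℝ)
  omega

lemma kronIdLin_apply {n p : ℕ} (M : Matrix (Fin n) (Fin n) ℝ)
    (lam : EuclideanSpace ℝ (Fin n × Fin p)) (i : Fin n) (j : Fin p) :
    kronIdLin p M lam (i, j) = ∑ k : Fin n, M i k * lam (k, j) := by
  simp [kronIdLin, Matrix.toEuclideanLin_apply, Matrix.mulVec, dotProduct,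
    Fintype.sum_prod_type, Matrix.one_apply, mul_ite, mul_zero,
    Finset.sum_ite_eq', Finset.sum_ite_eq]

lemma kronIdLin_isSymmetric {n p : ℕ} (M : Matrix (Fin n) (Fin n) ℝ) (hM : M.IsHermitian) :
    (kronIdLin p M).IsSymmetric := by
  rw [kronIdLin]
  refine Matrix.isHermitian_iff_isSymmetric.mp ?_
  rw [Matrix.IsHermitian, Matrix.conjTranspose_eq_transpose_of_trivial,
    ← Matrix.kroneckerMap_transpose]
  rw [← Matrix.conjTranspose_eq_transpose_of_trivial, hM.eq,
    ← Matrix.conjTranspose_eq_transpose_of_trivial, Matrix.conjTranspose_one]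

/-- Existence of a solution of the dual² problem:  with `H(λ) = Σᵢ (φᵢ(λᵢ) + (1/n) r(λᵢ))
+ (ρ/2) λᵀ C̄ λ` and `F_ρ(y) = sup_λ (−H(λ) − ⟪y, √C̄ λ⟫)` (an `ℝ ∪ {+∞}`-valued function),
if `λ ↦ Σᵢ φᵢ(λ) + r(λ)` attains its minimum on `ℝ^p`, then `F_ρ` attains its minimum:
there is `y*` with `F_ρ(y*)` finite and `F_ρ(y*) ≤ F_ρ(y)` for all `y`. -/
theorem stmt7 {n p : ℕ} (hn : 2 ≤ n) (hp : 1 ≤ p) (ρ : ℝ) (hρ : 0 ≤ ρ)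
    (φ : Fin n → (EuclideanSpace ℝ (Fin p) → ℝ))
    (hφconv : ∀ i, ConvexOn ℝ Set.univ (φ i))
    (hφdiff : ∀ i, Differentiable ℝ (φ i))
    (r : EuclideanSpace ℝ (Fin p) → ℝ)
    (hrconv : ConvexOn ℝ Set.univ r) (hrdiff : Differentiable ℝ r)
    (C : Matrix (Fin n) (Fin n) ℝ) (hCsymm : C.IsSymm) (hCpsd : C.PosSemidef)
    (hCker : LinearMap.ker (Matrix.mulVecLin C)
      = Submodule.span ℝ {(fun _ => 1 : Fin n → ℝ)})
    (R : Matrix (Fin n) (Fin n) ℝ) (hRpsd : R.PosSemidef) (hRR : R * R = C)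
    (H : EuclideanSpace ℝ (Fin n × Fin p) → ℝ)
    (hH : ∀ lam, H lam
      = (∑ i : Fin n, (φ i (blockComp lam i) + (1 / (n : ℝ)) * r (blockComp lam i)))
        + ρ / 2 * ⟪lam, kronIdLin p C lam⟫)
    (F : EuclideanSpace ℝ (Fin n × Fin p) → EReal)
    (hF : ∀ y, F y = ⨆ lam : EuclideanSpace ℝ (Fin n × Fin p),
      ((-H lam - ⟪y, kronIdLin p R lam⟫ : ℝ) : EReal))
    (lamstar : EuclideanSpace ℝ (Fin p))
    (hlamstar : ∀ lam : EuclideanSpace ℝ (Fin p),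
      (∑ i : Fin n, φ i lamstar) + r lamstar ≤ (∑ i : Fin n, φ i lam) + r lam) :
    ∃ ystar : EuclideanSpace ℝ (Fin n × Fin p),
      (∃ c : ℝ, F ystar = (c : EReal)) ∧ ∀ y, F ystar ≤ F y := by
  classical
  have hn0 : (n : ℝ) ≠ 0 := Nat.cast_ne_zero.mpr (by omega)
  set TT := kronIdLin p R with hTT
  have hTsym : TT.IsSymmetric := kronIdLin_isSymmetric R hRpsd.1
  have hinner : ∀ x y : EuclideanSpace ℝ (Fin n × Fin p),
      ⟪x, y⟫ = ∑ q : Fin n × Fin p, x q * y q := fun x y => by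
    simp [PiLp.inner_apply, RCLike.inner_apply]; exact Finset.sum_congr rfl fun _ _ => mul_comm _ _
  have hinnerE : ∀ x y : EuclideanSpace ℝ (Fin p), ⟪x, y⟫ = ∑ j, x j * y j := fun x y => by
    simp [PiLp.inner_apply, RCLike.inner_apply]; exact Finset.sum_congr rfl fun _ _ => mul_comm _ _
  -- kernel facts
  have hC1 : C *ᵥ (fun _ => (1:ℝ)) = 0 := by
    have h : (fun _ => (1:ℝ)) ∈ LinearMap.ker C.mulVecLin := by
      rw [hCker]; exact Submodule.mem_span_singleton_self _
    simpa [Matrix.mulVecLin_apply] using h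
  have hkerCR : ∀ x : Fin n → ℝ, C *ᵥ x = 0 → R *ᵥ x = 0 := by
    intro x hx
    have h0 : star x ⬝ᵥ (C *ᵥ x) = 0 := by rw [hx, dotProduct_zero]
    have hC' : C = Rᴴ * R := by rw [hRpsd.1.eq, hRR]
    rw [hC', ← Matrix.mulVec_mulVec, dotProduct_mulVec, vecMul_conjTranspose, star_star,
      dotProduct_star_self_eq_zero] at h0
    exact h0
  have hR1 : R *ᵥ (fun _ => (1:ℝ)) = 0 := hkerCR _ hC1
  -- C ⊗ I = (R ⊗ I)²
  have hCT : ∀ lam, kronIdLin p C lam = TT (TT lam) := by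
    intro lam
    refine PiLp.ext fun q => ?_
    obtain ⟨i, j⟩ := q
    rw [kronIdLin_apply, hTT, kronIdLin_apply]
    calc ∑ k, C i k * lam (k, j) = ∑ k, (∑ m, R i m * R m k) * lam (k, j) := by
          rw [← hRR]; simp [Matrix.mul_apply]
      _ = ∑ m, R i m * (kronIdLin p R lam) (m, j) := by
          simp_rw [Finset.sum_mul, mul_assoc, kronIdLin_apply, Finset.mul_sum]
          rw [Finset.sum_comm]
  have hinnerC : ∀ lam, ⟪lam, kronIdLin p C lam⟫ = ⟪TT lam, TT lam⟫ := by
    intro lam; rw [hCT, hTsym lam (TT lam)]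
  -- per-agent functions and gradients
  set f : Fin n → (EuclideanSpace ℝ (Fin p) → ℝ) :=
    fun i x => φ i x + (1 / (n : ℝ)) * r x with hf
  have hfdiff : ∀ i, Differentiable ℝ (f i) := fun i => (hφdiff i).add (hrdiff.const_mul _)
  have hfconv : ∀ i, ConvexOn ℝ Set.univ (f i) := by
    intro i
    exact (hφconv i).add (hrconv.smul (by positivity))
  set D : Fin n → (EuclideanSpace ℝ (Fin p) →L[ℝ] ℝ) :=
    fun i => fderiv ℝ (f i) lamstar with hD
  set g : Fin n → EuclideanSpace ℝ (Fin p) :=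
    fun i => (InnerProductSpace.toDual ℝ (EuclideanSpace ℝ (Fin p))).symm (D i) with hgdef
  have hg : ∀ i (v : EuclideanSpace ℝ (Fin p)), ⟪g i, v⟫ = D i v := fun i v => by
    simp [hgdef, InnerProductSpace.toDual_symm_apply]
  have hfsum : ∀ x, (∑ i, f i x) = (∑ i, φ i x) + r x := by
    intro x
    rw [hf]
    rw [Finset.sum_add_distrib, Finset.sum_const, Finset.card_univ, Fintype.card_fin]
    have : (n : ℝ) * ((1 / (n : ℝ)) * r x) = r x := by field_simp
    rw [nsmul_eq_mul, this]
  have hsumD : HasFDerivAt (fun x => (∑ i, φ i x) + r x) (∑ i, D i) lamstar := by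
    have h2 : HasFDerivAt (fun x => ∑ i, f i x) (∑ i, D i) lamstar :=
      HasFDerivAt.fun_sum (fun i _ => (hfdiff i lamstar).hasFDerivAt)
    simp only [hfsum] at h2
    exact h2
  have hGd : fderiv ℝ (fun x => (∑ i, φ i x) + r x) lamstar = 0 := by
    have hmin : IsLocalMin (fun x => (∑ i, φ i x) + r x) lamstar :=
      Filter.Eventually.of_forall fun x => hlamstar x
    exact hmin.fderiv_eq_zero
  have hDsum : (∑ i, D i) = 0 := by rw [← hsumD.fderiv]; exact hGd
  -- the aggregated gradient vector
  set gvec : EuclideanSpace ℝ (Fin n × Fin p) := WithLp.toLp 2 (fun q => g q.1 q.2) with hgvec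
  have hginner : ∀ v : EuclideanSpace ℝ (Fin n × Fin p),
      ⟪gvec, v⟫ = ∑ i, D i (blockComp v i) := by
    intro v
    rw [hinner, Fintype.sum_prod_type]
    refine Finset.sum_congr rfl fun i _ => ?_
    rw [← hg i (blockComp v i), hinnerE]
    rfl
  -- gvec is orthogonal to ker TT
  have hgorth : gvec ∈ (LinearMap.ker TT)ᗮ := by
    rw [Submodule.mem_orthogonal]
    intro u hu
    have hu' : TT u = 0 := hu
    have hcol : ∀ j : Fin p, ∃ c : ℝ, (fun k => u (k, j)) = c • (fun _ => (1:ℝ)) := by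
      intro j
      have hRcol : R *ᵥ (fun k => u (k, j)) = 0 := by
        funext i
        have := congrArg (fun v : EuclideanSpace ℝ (Fin n × Fin p) => v (i, j)) hu'
        rw [hTT, kronIdLin_apply] at this
        simpa [Matrix.mulVec, dotProduct] using this
      have hCcol : C *ᵥ (fun k => u (k, j)) = 0 := by
        rw [← hRR, ← Matrix.mulVec_mulVec, hRcol, Matrix.mulVec_zero]
      have : (fun k => u (k, j)) ∈ LinearMap.ker C.mulVecLin := by
        simpa [Matrix.mulVecLin_apply] using hCcol
      rw [hCker, Submodule.mem_span_singleton] at this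
      obtain ⟨c, hc⟩ := this
      exact ⟨c, hc.symm⟩
    choose cv hcv using hcol
    have hu2 : ∀ i j, u (i, j) = cv j := by
      intro i j
      have := congrFun (hcv j) i
      simpa using this
    have : ⟪u, gvec⟫ = ∑ i, D i (WithLp.toLp 2 (fun j => cv j)) := by
      rw [hinner, Fintype.sum_prod_type]
      refine Finset.sum_congr rfl fun i _ => ?_
      rw [← hg i (WithLp.toLp 2 (fun j => cv j)), hinnerE]
      refine Finset.sum_congr rfl fun j _ => ?_
      rw [hu2 i j]
      ring
    rw [this, ← ContinuousLinearMap.sum_apply, hDsum, ContinuousLinearMap.zero_apply]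
  -- solve TT ystar = -gvec
  have hrange : gvec ∈ LinearMap.range TT := by
    rw [symm_range_eq TT hTsym]; exact hgorth
  obtain ⟨w, hw⟩ := hrange
  refine ⟨-w, ?_⟩
  set ystar : EuclideanSpace ℝ (Fin n × Fin p) := -w with hystar
  have hTy : TT ystar = -gvec := by rw [hystar, map_neg, hw]
  set c : ℝ := -((∑ i, φ i lamstar) + r lamstar) with hc
  -- the consensus point
  set lb : EuclideanSpace ℝ (Fin n × Fin p) := WithLp.toLp 2 (fun q => lamstar q.2) with hlb
  have hblocklb : ∀ i, blockComp lb i = lamstar := fun i => rfl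
  have hTTlb : TT lb = 0 := by
    refine PiLp.ext fun q => ?_
    obtain ⟨i, j⟩ := q
    rw [hTT, kronIdLin_apply]
    have h1 : ∑ k, R i k * lb (k, j) = (∑ k, R i k * 1) * lamstar j := by
      rw [Finset.sum_mul]
      refine Finset.sum_congr rfl fun k _ => ?_
      rw [hlb]; ring
    have h2 : (∑ k, R i k * 1) = 0 := by
      have := congrFun hR1 i
      simpa [Matrix.mulVec, dotProduct] using this
    rw [h1, h2, zero_mul]
    rfl
  have hClb : kronIdLin p C lb = 0 := by
    rw [hCT, hTTlb, map_zero]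
  have hHlb : H lb = (∑ i, φ i lamstar) + r lamstar := by
    rw [hH, hClb, inner_zero_right, mul_zero, add_zero]
    simp only [hblocklb]
    exact hfsum lamstar
  -- value of the sup-term at the consensus point, for any y
  have claimB : ∀ y : EuclideanSpace ℝ (Fin n × Fin p),
      (-H lb - ⟪y, TT lb⟫ : ℝ) = c := by
    intro y
    rw [hTTlb, inner_zero_right, hHlb, hc]
    ring
  -- the sup-term is uniformly ≤ c for y = ystar
  have claimA : ∀ lam : EuclideanSpace ℝ (Fin n × Fin p),
      (-H lam - ⟪ystar, TT lam⟫ : ℝ) ≤ c := by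
    intro lam
    have h1 : ⟪ystar, TT lam⟫ = -∑ i, D i (blockComp lam i) := by
      rw [← hTsym ystar lam, hTy, inner_neg_left, hginner]
    have h2 : 0 ≤ ⟪lam, kronIdLin p C lam⟫ := by
      rw [hinnerC]; exact real_inner_self_nonneg
    have h3 : ∀ i, f i lamstar + D i (blockComp lam i - lamstar) ≤ f i (blockComp lam i) :=
      fun i => convexOn_grad_ineq (hfconv i) (hfdiff i lamstar).hasFDerivAt _
    have h4 : (∑ i, f i lamstar) + ((∑ i, D i (blockComp lam i)) - ∑ i, D i lamstar)
        ≤ ∑ i, f i (blockComp lam i) := by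
      have h := Finset.sum_le_sum (fun i (_ : i ∈ Finset.univ) => h3 i)
      simp only [map_sub] at h
      rw [Finset.sum_add_distrib, Finset.sum_sub_distrib] at h
      exact h
    have h5 : (∑ i, D i lamstar) = 0 := by
      rw [← ContinuousLinearMap.sum_apply, hDsum, ContinuousLinearMap.zero_apply]
    have h6 : (∑ i, (φ i (blockComp lam i) + (1 / (n : ℝ)) * r (blockComp lam i)))
        = ∑ i, f i (blockComp lam i) := rfl
    have h7 : (∑ i, f i lamstar) = -c := by rw [hfsum, hc]; ring
    have h8 : 0 ≤ ρ / 2 * ⟪lam, kronIdLin p C lam⟫ :=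
      mul_nonneg (by linarith) h2
    rw [hH, h1, h6]
    linarith
  have hFystar : F ystar = (c : EReal) := by
    rw [hF]
    apply le_antisymm
    · exact iSup_le fun lam => EReal.coe_le_coe_iff.2 (claimA lam)
    · calc (c : EReal) = ((-H lb - ⟪ystar, TT lb⟫ : ℝ) : EReal) := by
            rw [claimB ystar]
        _ ≤ _ := le_iSup (fun lam : EuclideanSpace ℝ (Fin n × Fin p) =>
              ((-H lam - ⟪ystar, TT lam⟫ : ℝ) : EReal)) lb
  refine ⟨⟨c, hFystar⟩, fun y => ?_⟩
  rw [hFystar, hF y]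
  refine le_iSup_of_le (f := fun lam : EuclideanSpace ℝ (Fin n × Fin p) =>
      ((-H lam - ⟪y, TT lam⟫ : ℝ) : EReal)) lb ?_
  show (c : EReal) ≤ ((-H lb - ⟪y, TT lb⟫ : ℝ) : EReal)
  rw [claimB y]
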